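/- Let $X$ be a finite-dimensional normed space, $0<p\leq 1$, $L,T<\infty$, and $\psi:X\to\mathbb{R}\cup\{-\infty\}$ measurable, continuous where finite, with $\mathscr{B}=\{|\psi|>T\}$ and $|\psi(x)-\psi(y)|\leq L\|x-y\|^p$ for $x,y\notin\mathscr{B}$. Then for any probability measures $\mu,\nu$ on $X$ with finite $p$-th moments, $\left|\int\psi\,d\mu-\int\psi\,d\nu\right| \leq L\,W_p(\mu,\nu) + \sqrt{\mu(\mathscr{B})}\,\|\psi\|_{L^2(\mu)} + \sqrt{\nu(\mathscr{B})}\,\|\psi\|_{L^2(\nu)} + T(\mu(\mathscr{B})+\nu(\mathscr{B}))$. -/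

import Mathlib

open MeasureTheory ENNReal

noncomputable section

/-- The set of couplings between `μ` and `ν`. -/
def couplings {X : Type*} [MeasurableSpace X] (μ ν : Measure X) : Set (Measure (X × X)) :=
  {π | π.map Prod.fst = μ ∧ π.map Prod.snd = ν}

/-- The order-`p` Wasserstein distance, `0 < p ≤ 1`:
`W_p(μ,ν) = inf_{π ∈ Π(μ,ν)} ∬ ‖x-y‖^p dπ(x,y)`. -/
def Wp {X : Type*} [MeasurableSpace X] [NormedAddCommGroup X] (p : ℝ)
    (μ ν : Measure X) : ℝ≥0∞ :=
  ⨅ π ∈ couplings μ ν, ∫⁻ q : X × X, (ENNReal.ofReal ‖q.1 - q.2‖) ^ p ∂π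

lemma aux_CS {X : Type*} [MeasurableSpace X] (μ : Measure X) (f : X → ℝ)
    (hf : Measurable f) (S : Set X) (hS : MeasurableSet S) (T : ℝ) :
    ∫⁻ x, S.indicator (fun z => (‖f z‖₊ : ℝ≥0∞) + ENNReal.ofReal T) x ∂μ
      ≤ μ S ^ (1 / 2 : ℝ) * eLpNorm f 2 μ + ENNReal.ofReal T * μ S := by
  rw [lintegral_indicator hS, lintegral_add_right _ measurable_const, setLIntegral_const]
  refine add_le_add ?_ le_rfl
  have h1 : ∫⁻ x in S, (‖f x‖₊ : ℝ≥0∞) ∂μ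
      = ∫⁻ x, S.indicator (fun _ => (1 : ℝ≥0∞)) x * (‖f x‖₊ : ℝ≥0∞) ∂μ := by
    rw [← lintegral_indicator hS]
    refine lintegral_congr fun x => ?_
    by_cases hx : x ∈ S <;> simp [hx]
  rw [h1]
  have hconj : Real.HolderConjugate 2 2 := Real.HolderConjugate.two_two
  calc ∫⁻ x, S.indicator (fun _ => (1 : ℝ≥0∞)) x * (‖f x‖₊ : ℝ≥0∞) ∂μ
      ≤ (∫⁻ x, S.indicator (fun _ => (1 : ℝ≥0∞)) x ^ (2 : ℝ) ∂μ) ^ (1 / 2 : ℝ)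
        * (∫⁻ x, (‖f x‖₊ : ℝ≥0∞) ^ (2 : ℝ) ∂μ) ^ (1 / 2 : ℝ) :=
      ENNReal.lintegral_mul_le_Lp_mul_Lq μ hconj
        (measurable_const.indicator hS).aemeasurable
        hf.nnnorm.coe_nnreal_ennreal.aemeasurable
    _ = μ S ^ (1 / 2 : ℝ) * eLpNorm f 2 μ := by
      congr 1
      · congr 1
        rw [← lintegral_indicator_one hS]
        refine lintegral_congr fun x => ?_
        by_cases hx : x ∈ S <;> simp [hx]
      · rw [eLpNorm_eq_lintegral_rpow_enorm_toReal two_ne_zero ENNReal.ofNat_ne_top]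
        norm_num [enorm_eq_nnnorm]

/-- for a measurable `ψ : X → ℝ ∪ {-∞}` (modelled as `EReal`, never `+∞`),
continuous where finite, with `𝓑 = {|ψ| > T}` and `ψ` being `p`-Hölder with constant `L`
off `𝓑`, and for any probability measures `μ, ν` with finite `p`-th moments:
`|∫ψ dμ - ∫ψ dν| ≤ L W_p(μ,ν) + √(μ𝓑) ‖ψ‖_{L²(μ)} + √(ν𝓑) ‖ψ‖_{L²(ν)} + T(μ𝓑 + ν𝓑)`.
(Integrals of `ψ` are taken via `EReal.toReal`; the `L²` norms are the `eLpNorm`s.) -/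
theorem integral_diff_le_of_holder_off_small_set
    {X : Type*} [NormedAddCommGroup X] [NormedSpace ℝ X]
    [FiniteDimensional ℝ X] [MeasurableSpace X] [BorelSpace X]
    {L T p : ℝ} (hp0 : 0 < p) (hp1 : p ≤ 1)
    (ψ : X → EReal) (hψtop : ∀ x, ψ x ≠ ⊤)
    (hψmeas : Measurable ψ)
    (hψcont : ∀ x, ψ x ≠ ⊥ → ContinuousAt ψ x)
    (𝓑 : Set X) (h𝓑 : 𝓑 = {x : X | (T : EReal) < ψ x ∨ ψ x < ((-T : ℝ) : EReal)})
    (hHolder : ∀ x ∉ 𝓑, ∀ y ∉ 𝓑, |(ψ x).toReal - (ψ y).toReal| ≤ L * ‖x - y‖ ^ p)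
    (μ ν : Measure X) [IsProbabilityMeasure μ] [IsProbabilityMeasure ν]
    (hμmom : ∫⁻ x, (ENNReal.ofReal ‖x‖) ^ p ∂μ ≠ ⊤)
    (hνmom : ∫⁻ x, (ENNReal.ofReal ‖x‖) ^ p ∂ν ≠ ⊤) :
    ENNReal.ofReal |(∫ x, (ψ x).toReal ∂μ) - ∫ x, (ψ x).toReal ∂ν|
      ≤ ENNReal.ofReal L * Wp p μ ν
        + (μ 𝓑) ^ (1 / 2 : ℝ) * eLpNorm (fun x => (ψ x).toReal) 2 μ
        + (ν 𝓑) ^ (1 / 2 : ℝ) * eLpNorm (fun x => (ψ x).toReal) 2 ν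
        + ENNReal.ofReal T * (μ 𝓑 + ν 𝓑) := by
  set f : X → ℝ := fun x => (ψ x).toReal with hf_def
  have hfmeas : Measurable f := hψmeas.ereal_toReal
  have hBmeas : MeasurableSet 𝓑 := by
    rw [h𝓑]
    have : {x : X | (T : EReal) < ψ x ∨ ψ x < ((-T : ℝ) : EReal)}
        = ψ ⁻¹' (Set.Ioi (T : EReal)) ∪ ψ ⁻¹' (Set.Iio ((-T : ℝ) : EReal)) := rfl
    rw [this]
    exact (hψmeas measurableSet_Ioi).union (hψmeas measurableSet_Iio)
  have hbound : ∀ y ∉ 𝓑, |f y| ≤ T := by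
    intro y hy
    rw [h𝓑, Set.mem_setOf_eq] at hy
    push_neg at hy
    obtain ⟨h1, h2⟩ := hy
    have hbot : ψ y ≠ ⊥ := by
      intro h
      rw [h] at h2
      exact absurd h2 (by simp)
    rw [abs_le]
    constructor
    · have := EReal.toReal_le_toReal h2 (by simp) (hψtop y)
      simpa using this
    · have := EReal.toReal_le_toReal h1 hbot (EReal.coe_ne_top T)
      simpa using this
  -- degenerate cases where the RHS is ⊤
  by_cases hμ2 : eLpNorm f 2 μ = ⊤ ∧ μ 𝓑 ≠ 0
  · have hB : (μ 𝓑) ^ (1 / 2 : ℝ) * eLpNorm f 2 μ = ⊤ := by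
      rw [hμ2.1, ENNReal.mul_top]
      simp only [ne_eq, ENNReal.rpow_eq_zero_iff, not_or, not_and]
      push_neg
      refine ⟨fun h => absurd h hμ2.2, fun h => by norm_num⟩
    rw [hB]
    simp
  by_cases hν2 : eLpNorm f 2 ν = ⊤ ∧ ν 𝓑 ≠ 0
  · have hB : (ν 𝓑) ^ (1 / 2 : ℝ) * eLpNorm f 2 ν = ⊤ := by
      rw [hν2.1, ENNReal.mul_top]
      simp only [ne_eq, ENNReal.rpow_eq_zero_iff, not_or, not_and]
      push_neg
      refine ⟨fun h => absurd h hν2.2, fun h => by norm_num⟩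
    rw [hB]
    simp
  push_neg at hμ2 hν2
  -- integrability
  have hint : ∀ (κ : Measure X), IsProbabilityMeasure κ → (eLpNorm f 2 κ = ⊤ → κ 𝓑 = 0) →
      Integrable f κ := by
    intro κ hκ h
    by_cases h2 : eLpNorm f 2 κ = ⊤
    · refine Integrable.mono' (integrable_const T) hfmeas.aestronglyMeasurable ?_
      have h0 : ∀ᵐ x ∂κ, x ∉ 𝓑 := by
        rw [ae_iff]
        simpa [not_not] using h h2
      filter_upwards [h0] with x hx
      simpa [Real.norm_eq_abs] using hbound x hx
    · exact (MemLp.integrable (by norm_num) ⟨hfmeas.aestronglyMeasurable, lt_top_iff_ne_top.2 h2⟩)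
  have hintμ : Integrable f μ := hint μ inferInstance hμ2
  have hintν : Integrable f ν := hint ν inferInstance hν2
  -- pointwise bound
  set ind : X → ℝ≥0∞ := fun z => 𝓑.indicator (fun w => (‖f w‖₊ : ℝ≥0∞) + ENNReal.ofReal T) z
    with hind_def
  have hindmeas : Measurable ind :=
    (hfmeas.nnnorm.coe_nnreal_ennreal.add measurable_const).indicator hBmeas
  have hptwise : ∀ x y : X, (‖f x - f y‖₊ : ℝ≥0∞)
      ≤ ENNReal.ofReal L * (ENNReal.ofReal ‖x - y‖) ^ p + ind x + ind y := by
    intro x y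
    have htri : (‖f x - f y‖₊ : ℝ≥0∞) ≤ (‖f x‖₊ : ℝ≥0∞) + (‖f y‖₊ : ℝ≥0∞) := by
      norm_cast
      exact nnnorm_sub_le _ _
    have hT : ∀ z ∉ 𝓑, (‖f z‖₊ : ℝ≥0∞) ≤ ENNReal.ofReal T := by
      intro z hz
      rw [← enorm_eq_nnnorm, Real.enorm_eq_ofReal_abs]
      exact ENNReal.ofReal_le_ofReal (hbound z hz)
    by_cases hx : x ∈ 𝓑
    · by_cases hy : y ∈ 𝓑
      · refine htri.trans ?_
        have : (‖f x‖₊ : ℝ≥0∞) + (‖f y‖₊ : ℝ≥0∞) ≤ ind x + ind y := by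
          rw [hind_def]
          simp only [Set.indicator_of_mem hx, Set.indicator_of_mem hy]
          exact add_le_add le_self_add le_self_add
        exact this.trans (add_le_add le_add_self le_rfl)
      · refine htri.trans ?_
        have : (‖f x‖₊ : ℝ≥0∞) + (‖f y‖₊ : ℝ≥0∞) ≤ ind x := by
          rw [hind_def]
          simp only [Set.indicator_of_mem hx]
          exact add_le_add le_rfl (hT y hy)
        exact this.trans (le_add_self.trans le_self_add)
    · by_cases hy : y ∈ 𝓑
      · refine htri.trans ?_
        have : (‖f x‖₊ : ℝ≥0∞) + (‖f y‖₊ : ℝ≥0∞) ≤ ind y := by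
          rw [hind_def]
          simp only [Set.indicator_of_mem hy]
          rw [add_comm]
          exact add_le_add le_rfl (hT x hx)
        exact this.trans le_add_self
      · rw [← enorm_eq_nnnorm, Real.enorm_eq_ofReal_abs]
        have h1 : ENNReal.ofReal |f x - f y| ≤ ENNReal.ofReal (L * ‖x - y‖ ^ p) :=
          ENNReal.ofReal_le_ofReal (hHolder x hx y hy)
        refine h1.trans (le_trans ?_ (le_self_add.trans le_self_add))
        rcases le_or_gt 0 L with hL | hL
        · rw [ENNReal.ofReal_mul hL,
            ENNReal.ofReal_rpow_of_nonneg (norm_nonneg _) hp0.le]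
        · have : L * ‖x - y‖ ^ p ≤ 0 :=
            mul_nonpos_of_nonpos_of_nonneg hL.le (Real.rpow_nonneg (norm_nonneg _) p)
          simp [ENNReal.ofReal_of_nonpos this]
  -- the key estimate for every coupling
  set R : ℝ≥0∞ := (μ 𝓑) ^ (1 / 2 : ℝ) * eLpNorm f 2 μ
      + ((ν 𝓑) ^ (1 / 2 : ℝ) * eLpNorm f 2 ν + ENNReal.ofReal T * (μ 𝓑 + ν 𝓑)) with hR_def
  have key : ∀ π ∈ couplings μ ν,
      ENNReal.ofReal |(∫ x, f x ∂μ) - ∫ x, f x ∂ν|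
        ≤ ENNReal.ofReal L * (∫⁻ q : X × X, (ENNReal.ofReal ‖q.1 - q.2‖) ^ p ∂π) + R := by
    rintro π ⟨hπ1, hπ2⟩
    have hπfst : Integrable (fun q : X × X => f q.1) π := by
      have h : Integrable f (π.map Prod.fst) := hπ1.symm ▸ hintμ
      exact (integrable_map_measure hfmeas.aestronglyMeasurable
        measurable_fst.aemeasurable).mp h
    have hπsnd : Integrable (fun q : X × X => f q.2) π := by
      have h : Integrable f (π.map Prod.snd) := hπ2.symm ▸ hintν
      exact (integrable_map_measure hfmeas.aestronglyMeasurable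
        measurable_snd.aemeasurable).mp h
    have hμeq : ∫ x, f x ∂μ = ∫ q : X × X, f q.1 ∂π := by
      rw [← hπ1, integral_map measurable_fst.aemeasurable hfmeas.aestronglyMeasurable]
    have hνeq : ∫ x, f x ∂ν = ∫ q : X × X, f q.2 ∂π := by
      rw [← hπ2, integral_map measurable_snd.aemeasurable hfmeas.aestronglyMeasurable]
    rw [hμeq, hνeq, ← integral_sub hπfst hπsnd]
    have hrp : Measurable fun q : X × X => (ENNReal.ofReal ‖q.1 - q.2‖) ^ p :=
      ((measurable_fst.sub measurable_snd).norm.ennreal_ofReal).pow_const p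
    have hind1 : Measurable fun q : X × X => ind q.1 := hindmeas.comp measurable_fst
    have hind2 : Measurable fun q : X × X => ind q.2 := hindmeas.comp measurable_snd
    calc ENNReal.ofReal |∫ q : X × X, (f q.1 - f q.2) ∂π|
        = (‖∫ q : X × X, (f q.1 - f q.2) ∂π‖₊ : ℝ≥0∞) :=
          (Real.enorm_eq_ofReal_abs _).symm
      _ ≤ ∫⁻ q : X × X, (‖f q.1 - f q.2‖₊ : ℝ≥0∞) ∂π :=
          enorm_integral_le_lintegral_enorm _
      _ ≤ ∫⁻ q : X × X, (ENNReal.ofReal L * (ENNReal.ofReal ‖q.1 - q.2‖) ^ p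
            + ind q.1 + ind q.2) ∂π := lintegral_mono fun q => hptwise q.1 q.2
      _ = ENNReal.ofReal L * (∫⁻ q : X × X, (ENNReal.ofReal ‖q.1 - q.2‖) ^ p ∂π)
            + (∫⁻ x, ind x ∂μ) + ∫⁻ x, ind x ∂ν := by
          rw [lintegral_add_right _ hind2,
            lintegral_add_right _ hind1,
            lintegral_const_mul _ hrp]
          congr 1
          · congr 1
            rw [← hπ1, lintegral_map hindmeas measurable_fst]
          · rw [← hπ2, lintegral_map hindmeas measurable_snd]
      _ ≤ ENNReal.ofReal L * (∫⁻ q : X × X, (ENNReal.ofReal ‖q.1 - q.2‖) ^ p ∂π)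
            + ((μ 𝓑) ^ (1 / 2 : ℝ) * eLpNorm f 2 μ + ENNReal.ofReal T * μ 𝓑)
            + ((ν 𝓑) ^ (1 / 2 : ℝ) * eLpNorm f 2 ν + ENNReal.ofReal T * ν 𝓑) :=
          add_le_add (add_le_add le_rfl (aux_CS μ f hfmeas 𝓑 hBmeas T))
            (aux_CS ν f hfmeas 𝓑 hBmeas T)
      _ = ENNReal.ofReal L * (∫⁻ q : X × X, (ENNReal.ofReal ‖q.1 - q.2‖) ^ p ∂π) + R := by
          rw [hR_def]; ring
  have hprod : (μ.prod ν) ∈ couplings μ ν := by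
    constructor
    · rw [Measure.map_fst_prod]; simp
    · rw [Measure.map_snd_prod]; simp
  have hgoal : ENNReal.ofReal |(∫ x, f x ∂μ) - ∫ x, f x ∂ν|
      ≤ ENNReal.ofReal L * Wp p μ ν + R := by
    rcases eq_or_ne (ENNReal.ofReal L) 0 with hc | hc
    · have h := key _ hprod
      rw [hc, zero_mul] at h ⊢
      simpa using h
    · rw [← tsub_le_iff_right, mul_comm (ENNReal.ofReal L) (Wp p μ ν),
        ← ENNReal.div_le_iff_le_mul (Or.inl hc) (Or.inl ENNReal.ofReal_ne_top)]
      unfold Wp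
      refine le_iInf₂ fun π hπ => ?_
      rw [ENNReal.div_le_iff_le_mul (Or.inl hc) (Or.inl ENNReal.ofReal_ne_top),
        mul_comm _ (ENNReal.ofReal L), tsub_le_iff_right]
      exact key π hπ
  refine hgoal.trans (le_of_eq ?_)
  rw [hR_def]; ring
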